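/- Let C ⊆ ℝ^N be open and convex and Φ : C → ℝ a differentiable convex function with isotone gradient. If x₁, x₂, y₁, y₂ ∈ C and λ ∈ (0,1) satisfy y₂ ≤ x₂ ≤ (1−λ)y₁ + λy₂ ≤ x₁ ≤ y₁, then 0 ≤ (1−λ)Φ(x₁) + λΦ(x₂) − Φ((1−λ)x₁ + λx₂) ≤ (1−λ)Φ(y₁) + λΦ(y₂) − Φ((1−λ)y₁ + λy₂). -/

import Mathlib

lemma dirLe {N : ℕ} {C : Set (Fin N → ℝ)} {Φ : (Fin N → ℝ) → ℝ}
    (hgrad : ∀ u ∈ C, ∀ v ∈ C, u ≤ v →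
      ∀ i : Fin N, fderiv ℝ Φ u (Pi.single i 1) ≤ fderiv ℝ Φ v (Pi.single i 1))
    {u v : Fin N → ℝ} (hu : u ∈ C) (hv : v ∈ C) (huv : u ≤ v)
    {d : Fin N → ℝ} (hd : 0 ≤ d) : fderiv ℝ Φ u d ≤ fderiv ℝ Φ v d := by
  have hds : d = ∑ i, (d i) • (Pi.single i 1 : Fin N → ℝ) := by
    funext j
    simp [Finset.sum_apply, Pi.single_apply, Finset.sum_ite_eq]
  rw [hds, map_sum, map_sum]
  apply Finset.sum_le_sum
  intro i _
  rw [map_smul, map_smul]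
  exact smul_le_smul_of_nonneg_left (hgrad u hu v hv huv i) (hd i)


lemma core {N : ℕ} {C : Set (Fin N → ℝ)} (hCc : Convex ℝ C)
    {Φ : (Fin N → ℝ) → ℝ} (hdiff : ∀ z ∈ C, DifferentiableAt ℝ Φ z)
    {μ : ℝ} (hμ0 : 0 ≤ μ) (hμ1 : μ ≤ 1)
    {z p q : Fin N → ℝ} (hz : z ∈ C) (hp : p ∈ C) (hq : q ∈ C)
    (hkey : ∀ t ∈ Set.Icc (0:ℝ) 1,
      fderiv ℝ Φ (μ • (p + t • (q - p)) + (1-μ) • z) (q - p)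
        ≤ fderiv ℝ Φ (p + t • (q - p)) (q - p)) :
    μ * Φ p + (1-μ) * Φ z - Φ (μ • p + (1-μ) • z)
      ≤ μ * Φ q + (1-μ) * Φ z - Φ (μ • q + (1-μ) • z) := by
  set b : ℝ → (Fin N → ℝ) := fun t => p + t • (q - p) with hb
  have hbC : ∀ t ∈ Set.Icc (0:ℝ) 1, b t ∈ C := by
    intro t ht
    have : b t = (1 - t) • p + t • q := by
      funext j; simp [hb]; ring
    rw [this]
    exact hCc hp hq (by linarith [ht.2]) ht.1 (by ring)
  have hmidC : ∀ t ∈ Set.Icc (0:ℝ) 1, μ • b t + (1-μ) • z ∈ C := by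
    intro t ht
    exact hCc (hbC t ht) hz hμ0 (by linarith) (by ring)
  have hbd : ∀ t : ℝ, HasDerivAt b (q - p) t := by
    intro t
    have := ((hasDerivAt_id t).smul_const (q - p)).const_add p
    rw [one_smul] at this
    exact this
  have hmd : ∀ t : ℝ, HasDerivAt (fun s => μ • b s + (1-μ) • z) (μ • (q - p)) t := by
    intro t
    exact ((hbd t).const_smul μ).add_const _
  set g : ℝ → ℝ := fun t => μ * Φ (b t) - Φ (μ • b t + (1-μ) • z) with hgdef
  set g' : ℝ → ℝ := fun t =>
    μ * fderiv ℝ Φ (b t) (q - p) - μ * fderiv ℝ Φ (μ • b t + (1-μ) • z) (q - p) with hg'def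
  have hg : ∀ t ∈ Set.Icc (0:ℝ) 1, HasDerivAt g (g' t) t := by
    intro t ht
    have h1 : HasDerivAt (fun s => Φ (b s)) (fderiv ℝ Φ (b t) (q - p)) t :=
      (hdiff _ (hbC t ht)).hasFDerivAt.comp_hasDerivAt t (hbd t)
    have h2 : HasDerivAt (fun s => Φ (μ • b s + (1-μ) • z))
        (fderiv ℝ Φ (μ • b t + (1-μ) • z) (μ • (q - p))) t :=
      (hdiff _ (hmidC t ht)).hasFDerivAt.comp_hasDerivAt t (hmd t)
    have h3 : fderiv ℝ Φ (μ • b t + (1-μ) • z) (μ • (q - p))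
        = μ * fderiv ℝ Φ (μ • b t + (1-μ) • z) (q - p) := by
      rw [map_smul]; rfl
    rw [h3] at h2
    exact (h1.const_mul μ).sub h2
  have hmono : MonotoneOn g (Set.Icc (0:ℝ) 1) := by
    apply monotoneOn_of_deriv_nonneg (convex_Icc 0 1)
    · intro t ht
      exact (hg t ht).continuousAt.continuousWithinAt
    · intro t ht
      rw [interior_Icc] at ht
      exact (hg t (Set.mem_Icc_of_Ioo ht)).differentiableAt.differentiableWithinAt
    · intro t ht
      rw [interior_Icc] at ht
      have ht' := Set.mem_Icc_of_Ioo ht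
      rw [(hg t ht').deriv]
      have := hkey t ht'
      simp only [hg'def]
      nlinarith [hkey t ht']
  have hkey2 : g 0 ≤ g 1 := hmono (by norm_num) (by norm_num) (by norm_num)
  have hb0 : b 0 = p := by funext j; simp [hb]
  have hb1 : b 1 = q := by funext j; simp [hb]
  rw [hgdef] at hkey2
  simp only [hb0, hb1] at hkey2
  linarith

/-- Contractibility of Jensen's gap: for a differentiable convex `Φ` with isotone gradient
on an open convex `C ⊆ ℝ^N` and `y₂ ≤ x₂ ≤ (1-λ)y₁ + λy₂ ≤ x₁ ≤ y₁`, the Jensen gap for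
`(x₁,x₂)` is between `0` and the Jensen gap for `(y₁,y₂)`. -/
theorem stmt16 (N : ℕ) (C : Set (Fin N → ℝ)) (hCo : IsOpen C) (hCc : Convex ℝ C)
    (Φ : (Fin N → ℝ) → ℝ)
    (hdiff : ∀ z ∈ C, DifferentiableAt ℝ Φ z) (hconv : ConvexOn ℝ C Φ)
    (hgrad : ∀ u ∈ C, ∀ v ∈ C, u ≤ v →
      ∀ i : Fin N, fderiv ℝ Φ u (Pi.single i 1) ≤ fderiv ℝ Φ v (Pi.single i 1))
    (x₁ x₂ y₁ y₂ : Fin N → ℝ) (hx₁ : x₁ ∈ C) (hx₂ : x₂ ∈ C) (hy₁ : y₁ ∈ C) (hy₂ : y₂ ∈ C)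
    (l : ℝ) (hl0 : 0 < l) (hl1 : l < 1)
    (h1 : y₂ ≤ x₂) (h2 : x₂ ≤ (1 - l) • y₁ + l • y₂)
    (h3 : (1 - l) • y₁ + l • y₂ ≤ x₁) (h4 : x₁ ≤ y₁) :
    0 ≤ (1 - l) * Φ x₁ + l * Φ x₂ - Φ ((1 - l) • x₁ + l • x₂) ∧
      (1 - l) * Φ x₁ + l * Φ x₂ - Φ ((1 - l) • x₁ + l • x₂) ≤
        (1 - l) * Φ y₁ + l * Φ y₂ - Φ ((1 - l) • y₁ + l • y₂) := by
  have hx2x1 : x₂ ≤ x₁ := le_trans h2 h3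
  have hx2y1 : x₂ ≤ y₁ := h2.trans (h3.trans h4)
  constructor
  · have := hconv.2 hx₁ hx₂ (by linarith : (0:ℝ) ≤ 1 - l) hl0.le (by ring)
    simp only [smul_eq_mul] at this
    linarith
  · -- Step A : vary first argument from x₁ to y₁
    have stepA : (1-l) * Φ x₁ + (1-(1-l)) * Φ x₂ - Φ ((1-l) • x₁ + (1-(1-l)) • x₂)
        ≤ (1-l) * Φ y₁ + (1-(1-l)) * Φ x₂ - Φ ((1-l) • y₁ + (1-(1-l)) • x₂) := by
      apply core hCc hdiff (by linarith) (by linarith) hx₂ hx₁ hy₁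
      intro t ht
      set b : Fin N → ℝ := x₁ + t • (y₁ - x₁) with hbdef
      have hbC : b ∈ C := by
        have : b = (1 - t) • x₁ + t • y₁ := by funext j; simp [hbdef]; ring
        rw [this]; exact hCc hx₁ hy₁ (by linarith [ht.2]) ht.1 (by ring)
      have hmidC : (1-l) • b + (1-(1-l)) • x₂ ∈ C :=
        hCc hbC hx₂ (by linarith) (by linarith) (by ring)
      have hle : (1-l) • b + (1-(1-l)) • x₂ ≤ b := by
        intro j
        have hb : x₂ j ≤ b j := by
          have h5 := hx2x1 j
          have h6 := h4 j
          have h7 := ht.1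
          simp only [hbdef, Pi.add_apply, Pi.smul_apply, Pi.sub_apply, smul_eq_mul]
          nlinarith
        simp only [Pi.add_apply, Pi.smul_apply, Pi.sub_apply, smul_eq_mul]
        nlinarith
      have hd : (0 : Fin N → ℝ) ≤ y₁ - x₁ := by
        intro j; simpa using h4 j
      exact dirLe hgrad hmidC hbC hle hd
    have e : (1:ℝ) - (1-l) = l := by ring
    rw [e] at stepA
    -- Step B : vary second argument from x₂ to y₂
    have stepB : l * Φ x₂ + (1-l) * Φ y₁ - Φ (l • x₂ + (1-l) • y₁)
        ≤ l * Φ y₂ + (1-l) * Φ y₁ - Φ (l • y₂ + (1-l) • y₁) := by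
      apply core hCc hdiff hl0.le hl1.le hy₁ hx₂ hy₂
      intro t ht
      set b : Fin N → ℝ := x₂ + t • (y₂ - x₂) with hbdef
      have hbC : b ∈ C := by
        have : b = (1 - t) • x₂ + t • y₂ := by funext j; simp [hbdef]; ring
        rw [this]; exact hCc hx₂ hy₂ (by linarith [ht.2]) ht.1 (by ring)
      have hmidC : l • b + (1-l) • y₁ ∈ C :=
        hCc hbC hy₁ hl0.le (by linarith) (by ring)
      have hle : b ≤ l • b + (1-l) • y₁ := by
        intro j
        have hb : b j ≤ y₁ j := by
          have h5 := h1 j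
          have h6 := hx2y1 j
          have h7 := ht.1
          have h8 := ht.2
          simp only [hbdef, Pi.add_apply, Pi.smul_apply, Pi.sub_apply, smul_eq_mul]
          nlinarith
        simp only [Pi.add_apply, Pi.smul_apply, Pi.sub_apply, smul_eq_mul]
        nlinarith
      have hd : (0 : Fin N → ℝ) ≤ x₂ - y₂ := by
        intro j; simpa using h1 j
      have key := dirLe hgrad hbC hmidC hle hd
      have hneg : (y₂ - x₂ : Fin N → ℝ) = -(x₂ - y₂) := by funext j; simp
      rw [hneg, map_neg, map_neg]
      linarith
    have hcomm : ∀ a : Fin N → ℝ, l • a + (1-l) • y₁ = (1-l) • y₁ + l • a :=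
      fun a => add_comm _ _
    simp only [hcomm] at stepB
    linarith
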